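/- Let A be a reduced commutative Z-graded algebra over a commutative ring k. Then every grouplike element of the coring A ⊗ k[X, X^{-1}] is of the form Σ_{i=1}^n e_i ⊗ X^{d_i}, where 1 = e_1 + ⋯ + e_n is a decomposition into orthogonal idempotents and d_i ∈ Z; i.e., the natural map from continuous functions Spec(A) → Z (Zariski topology on Spec(A), discrete on Z) to G(A ⊗ k[X,X^{-1}]) is a bijection. -/

import Mathlib

set_option synthInstance.maxHeartbeats 1000000
set_option maxHeartbeats 4000000


open TensorProduct LaurentPolynomial

universe u

namespace GradedGrouplike

variable {k : Type u} [CommRing k]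

/-- The comultiplication of the Hopf algebra `H = k[X, X⁻¹] = k ℤ`, `Δ(Xⁿ) = Xⁿ ⊗ Xⁿ`. -/
noncomputable def comulL :
    LaurentPolynomial k →ₗ[k] LaurentPolynomial k ⊗[k] LaurentPolynomial k :=
  Finsupp.lsum k (fun n : ℤ =>
    LinearMap.toSpanSingleton k _ ((T n : LaurentPolynomial k) ⊗ₜ[k] (T n : LaurentPolynomial k))) ∘ₗ
    (AddMonoidAlgebra.coeffLinearEquiv k).toLinearMap

/-- The counit of `k[X, X⁻¹]`, `ε(Xⁿ) = 1`. -/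
noncomputable def counitL : LaurentPolynomial k →ₗ[k] k :=
  Finsupp.lsum k (fun _ : ℤ => LinearMap.toSpanSingleton k k 1) ∘ₗ
    (AddMonoidAlgebra.coeffLinearEquiv k).toLinearMap

variable {A : Type u} [CommRing A] [Algebra k A]

/-- `x ∈ A ⊗ k[X,X⁻¹]` is a grouplike element of the coring `A ⊗ k[X,X⁻¹]` associated to
the coaction `ρ` (written via the identification
`(A ⊗ H) ⊗_A (A ⊗ H) ≅ A ⊗ H ⊗ H`, cf. the Harrison 1-cocycle condition). -/
noncomputable def IsGrouplikeL (ρ : A →ₗ[k] A ⊗[k] LaurentPolynomial k)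
    (x : A ⊗[k] LaurentPolynomial k) : Prop :=
  (TensorProduct.assoc k A (LaurentPolynomial k) (LaurentPolynomial k)).symm
      ((LinearMap.lTensor A comulL) x)
    = (LinearMap.rTensor (LaurentPolynomial k) (LinearMap.mulLeft k x))
        ((LinearMap.rTensor (LaurentPolynomial k) ρ) x) ∧
  (TensorProduct.rid k A) ((LinearMap.lTensor A counitL) x) = 1

/-- The coaction `A → A ⊗ k[X,X⁻¹]` of a `ℤ`-grading: `a_n ↦ a_n ⊗ Xⁿ` for `a_n`
homogeneous of degree `n`. -/
noncomputable def gradedCoaction (𝒜 : ℤ → Submodule k A) [GradedAlgebra 𝒜] :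
    A →ₗ[k] A ⊗[k] LaurentPolynomial k :=
  (DirectSum.toModule k ℤ (A ⊗[k] LaurentPolynomial k) (fun n =>
    { toFun := fun (a : ↥(𝒜 n)) => (↑a : A) ⊗ₜ[k] (T n : LaurentPolynomial k)
      map_add' := fun a b => by simp [TensorProduct.add_tmul]
      map_smul' := fun t a => by simp [TensorProduct.smul_tmul'] })) ∘ₗ
  (DirectSum.decomposeAlgEquiv 𝒜).toLinearMap

noncomputable def Psi (M : Type u) [AddCommMonoid M] [Module k M] :
    (M ⊗[k] LaurentPolynomial k) ≃ₗ[k] (ℤ →₀ M) :=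
  (LinearEquiv.lTensor M (AddMonoidAlgebra.coeffLinearEquiv k)) ≪≫ₗ
    TensorProduct.finsuppScalarRight k k M ℤ

theorem Psi_tmul {M : Type u} [AddCommMonoid M] [Module k M] (a : M) (n : ℤ) :
    Psi (k := k) M (a ⊗ₜ[k] (T n : LaurentPolynomial k)) = Finsupp.single n a := by
  ext i
  have h : Psi (k := k) M (a ⊗ₜ[k] (T n : LaurentPolynomial k)) i
      = Finsupp.single n (1:k) i • a := by
    rw [T]; simp [Psi, -single_eq_C_mul_T]
  rw [h, Finsupp.single_apply, Finsupp.single_apply]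
  split <;> simp

theorem comulL_T (n : ℤ) :
    comulL (k := k) (T n) = (T n : LaurentPolynomial k) ⊗ₜ[k] (T n : LaurentPolynomial k) := by
  conv_lhs => rw [T]
  simp [comulL, -single_eq_C_mul_T]

theorem counitL_T (n : ℤ) : counitL (k := k) (T n) = 1 := by
  rw [T]; simp [counitL, -single_eq_C_mul_T]

theorem tmul_mul_tmulT (a b : A) (i j : ℤ) :
    (a ⊗ₜ[k] (T i : LaurentPolynomial k)) * (b ⊗ₜ[k] (T j : LaurentPolynomial k))
      = (a * b) ⊗ₜ[k] (T (i + j) : LaurentPolynomial k) := by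
  rw [Algebra.TensorProduct.tmul_mul_tmul, T_add]

theorem sum_single_eval {M : Type u} [AddCommMonoid M] (s : Finset ℤ) (v : ℤ → M) (n : ℤ) :
    (∑ p ∈ s, Finsupp.single p (v p)) n = if n ∈ s then v n else 0 := by
  classical
  rw [Finset.sum_apply']
  simp_rw [Finsupp.single_apply]
  rw [Finset.sum_ite_eq' s n v]

variable (𝒜 : ℤ → Submodule k A) [GradedAlgebra 𝒜]

theorem rho_hom {m : ℤ} (a : A) (ha : a ∈ 𝒜 m) :
    gradedCoaction 𝒜 a = a ⊗ₜ[k] (T m : LaurentPolynomial k) := by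
  rw [gradedCoaction]
  simp only [LinearMap.coe_comp, Function.comp_apply, AlgEquiv.toLinearMap_apply,
    DirectSum.decomposeAlgEquiv_apply]
  rw [DirectSum.decompose_of_mem 𝒜 ha, ← DirectSum.lof_eq_of k, DirectSum.toModule_lof]
  rfl

open scoped Classical in
theorem rho_eq (a : A) :
    gradedCoaction 𝒜 a = ∑ m ∈ (DirectSum.decompose 𝒜 a).support,
      ((DirectSum.decompose 𝒜 a m : A) ⊗ₜ[k] (T m : LaurentPolynomial k)) := by
  classical
  conv_lhs => rw [← DirectSum.sum_support_decompose 𝒜 a]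
  rw [map_sum]
  exact Finset.sum_congr rfl fun m _ => rho_hom 𝒜 _ (SetLike.coe_mem _)



open scoped Classical in
theorem x_repr (x : A ⊗[k] LaurentPolynomial k) :
    x = ∑ n ∈ (Psi (k := k) A x).support,
      ((Psi (k := k) A x) n) ⊗ₜ[k] (T n : LaurentPolynomial k) := by
  apply (Psi (k := k) A).injective
  rw [map_sum]
  simp_rw [Psi_tmul]
  ext m
  rw [sum_single_eval]
  split
  · rfl
  · exact Finsupp.notMem_support_iff.mp (by assumption)

open scoped Classical in
theorem grouplike_F1 {x : A ⊗[k] LaurentPolynomial k}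
    (hx : IsGrouplikeL (gradedCoaction 𝒜) x) (n₀ : ℤ) :
    x * gradedCoaction 𝒜 ((Psi (k := k) A x) n₀)
      = ((Psi (k := k) A x) n₀) ⊗ₜ[k] (T n₀ : LaurentPolynomial k) := by
  set c := Psi (k := k) A x with hc
  set sc := c.support with hsc
  have hxe := x_repr x
  rw [← hc, ← hsc] at hxe
  have key := hx.1
  have e1 : (TensorProduct.assoc k A (LaurentPolynomial k) (LaurentPolynomial k)).symm
      ((LinearMap.lTensor A comulL) x)
      = ∑ n ∈ sc, ((c n) ⊗ₜ[k] (T n : LaurentPolynomial k)) ⊗ₜ[k] (T n : LaurentPolynomial k) := by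
    conv_lhs => rw [hxe]
    rw [map_sum, map_sum]
    refine Finset.sum_congr rfl fun n _ => ?_
    rw [LinearMap.lTensor_tmul, comulL_T, TensorProduct.assoc_symm_tmul]
  have e0 : (LinearMap.rTensor (LaurentPolynomial k) (gradedCoaction 𝒜)) x
      = ∑ n ∈ sc, (gradedCoaction 𝒜 (c n)) ⊗ₜ[k] (T n : LaurentPolynomial k) := by
    conv_lhs => rw [hxe]
    rw [map_sum]
    exact Finset.sum_congr rfl fun n _ => LinearMap.rTensor_tmul _ _ _ _
  have e2 : (LinearMap.rTensor (LaurentPolynomial k) (LinearMap.mulLeft k x))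
      ((LinearMap.rTensor (LaurentPolynomial k) (gradedCoaction 𝒜)) x)
      = ∑ n ∈ sc, (x * gradedCoaction 𝒜 (c n)) ⊗ₜ[k] (T n : LaurentPolynomial k) := by
    rw [e0, map_sum]
    exact Finset.sum_congr rfl fun n _ => LinearMap.rTensor_tmul _ _ _ _
  rw [e1, e2] at key
  have key2 := congrArg (fun z => (Psi (k := k) (A ⊗[k] LaurentPolynomial k) z) n₀) key
  simp only [map_sum] at key2
  simp_rw [Psi_tmul] at key2
  rw [sum_single_eval, sum_single_eval] at key2
  by_cases hn : n₀ ∈ sc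
  · rw [if_pos hn, if_pos hn] at key2
    exact key2.symm
  · have hz : c n₀ = 0 := Finsupp.notMem_support_iff.mp hn
    rw [hz, map_zero, mul_zero, TensorProduct.zero_tmul]

open scoped Classical in
theorem grouplike_F2 {x : A ⊗[k] LaurentPolynomial k}
    (hx : IsGrouplikeL (gradedCoaction 𝒜) x) :
    ∑ n ∈ (Psi (k := k) A x).support, (Psi (k := k) A x) n = 1 := by
  set c := Psi (k := k) A x with hc
  have hxe := x_repr x
  rw [← hc] at hxe
  have key := hx.2
  conv_lhs at key => rw [hxe]
  rw [map_sum, map_sum] at key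
  rw [← key]
  refine Finset.sum_congr rfl fun n _ => ?_
  rw [LinearMap.lTensor_tmul, counitL_T]
  simp


variable {𝒜} in
noncomputable def wdeg (c : ℤ →₀ A) (n m : ℤ) : A := (DirectSum.decompose 𝒜 (c n) m : A)

theorem wdeg_mem (c : ℤ →₀ A) (n m : ℤ) : wdeg (𝒜 := 𝒜) c n m ∈ 𝒜 m := SetLike.coe_mem _

open scoped Classical in
noncomputable def sdx (c : ℤ →₀ A) : Finset ℤ :=
  c.support.biUnion (fun n => (DirectSum.decompose 𝒜 (c n)).support)

open scoped Classical in
theorem wdeg_ne {c : ℤ →₀ A} {n m : ℤ} (h : wdeg (𝒜 := 𝒜) c n m ≠ 0) :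
    n ∈ c.support ∧ m ∈ sdx 𝒜 c := by
  have hn : n ∈ c.support := by
    by_contra hn
    apply h
    rw [wdeg, Finsupp.notMem_support_iff.mp hn, DirectSum.decompose_zero]
    rfl
  refine ⟨hn, Finset.mem_biUnion.mpr ⟨n, hn, ?_⟩⟩
  rw [DFinsupp.mem_support_iff]
  intro h0
  apply h
  rw [wdeg, h0]
  rfl

open scoped Classical in
theorem sum_wdeg (c : ℤ →₀ A) (n : ℤ) : ∑ m ∈ sdx 𝒜 c, wdeg (𝒜 := 𝒜) c n m = c n := by
  by_cases hn : n ∈ c.support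
  · rw [← DirectSum.sum_support_decompose 𝒜 (c n)]
    refine (Finset.sum_subset (fun m hm => Finset.mem_biUnion.mpr ⟨n, hn, hm⟩) ?_).symm
    intro m _ hm
    rw [wdeg, DFinsupp.notMem_support_iff.mp hm]
    rfl
  · rw [Finsupp.notMem_support_iff.mp hn]
    refine Finset.sum_eq_zero fun m _ => ?_
    rw [wdeg, Finsupp.notMem_support_iff.mp hn, DirectSum.decompose_zero]
    rfl

open scoped Classical in
theorem rho_cf (c : ℤ →₀ A) (n : ℤ) :
    gradedCoaction 𝒜 (c n)
      = ∑ m ∈ sdx 𝒜 c, (wdeg (𝒜 := 𝒜) c n m) ⊗ₜ[k] (T m : LaurentPolynomial k) := by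
  conv_lhs => rw [show c n = ∑ m ∈ sdx 𝒜 c, wdeg (𝒜 := 𝒜) c n m from (sum_wdeg 𝒜 c n).symm]
  rw [map_sum]
  exact Finset.sum_congr rfl fun m _ => rho_hom 𝒜 _ (wdeg_mem 𝒜 c n m)


theorem coeff_double {M : Type u} [AddCommMonoid M] (s t : Finset ℤ) (v : ℤ → ℤ → M) (r : ℤ) :
    (∑ p ∈ s, ∑ m ∈ t, Finsupp.single (p + m) (v p m)) r
      = ∑ p ∈ s, ∑ m ∈ t, (if p + m = r then v p m else 0) := by
  classical
  rw [Finset.sum_apply']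
  refine Finset.sum_congr rfl fun p _ => ?_
  rw [Finset.sum_apply']
  exact Finset.sum_congr rfl fun m _ => Finsupp.single_apply

open scoped Classical in
theorem coeffC {x : A ⊗[k] LaurentPolynomial k}
    (hx : IsGrouplikeL (gradedCoaction 𝒜) x) (n r : ℤ) :
    ∑ p ∈ (Psi (k := k) A x).support, ∑ m ∈ sdx 𝒜 (Psi (k := k) A x),
        (if p + m = r then (Psi (k := k) A x) p * wdeg (𝒜 := 𝒜) (Psi (k := k) A x) n m else 0)
      = if n = r then (Psi (k := k) A x) n else 0 := by
  set c := Psi (k := k) A x with hc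
  have hxe := x_repr x
  rw [← hc] at hxe
  have h := grouplike_F1 𝒜 hx n
  rw [← hc] at h
  conv_lhs at h => rw [hxe]
  rw [rho_cf 𝒜 c n, Finset.sum_mul_sum] at h
  simp_rw [tmul_mul_tmulT] at h
  have h2 := congrArg (fun z => (Psi (k := k) A z) r) h
  simp only [map_sum, Psi_tmul] at h2
  rw [coeff_double] at h2
  rw [h2, Finsupp.single_apply]

open scoped Classical in
theorem coeffC' {x : A ⊗[k] LaurentPolynomial k}
    (hx : IsGrouplikeL (gradedCoaction 𝒜) x) (q n r : ℤ) :
    ∑ p ∈ (Psi (k := k) A x).support, ∑ m ∈ sdx 𝒜 (Psi (k := k) A x),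
        (if p + m = r then
          wdeg (𝒜 := 𝒜) (Psi (k := k) A x) p (p + q) * wdeg (𝒜 := 𝒜) (Psi (k := k) A x) n m
        else 0)
      = if n = r then wdeg (𝒜 := 𝒜) (Psi (k := k) A x) n (n + q) else 0 := by
  set c := Psi (k := k) A x with hc
  have h := congrArg (GradedRing.proj 𝒜 (r + q)) (coeffC 𝒜 hx n r)
  rw [map_sum] at h
  have hL : ∀ p : ℤ, GradedRing.proj 𝒜 (r + q)
        (∑ m ∈ sdx 𝒜 c, if p + m = r then c p * wdeg (𝒜 := 𝒜) c n m else 0)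
      = ∑ m ∈ sdx 𝒜 c,
          (if p + m = r then wdeg (𝒜 := 𝒜) c p (p + q) * wdeg (𝒜 := 𝒜) c n m else 0) := by
    intro p
    rw [map_sum]
    refine Finset.sum_congr rfl fun m _ => ?_
    split_ifs with hpm
    · rw [GradedRing.proj_apply]
      have hq : r + q = (p + q) + m := by omega
      rw [hq, DirectSum.coe_decompose_mul_add_of_right_mem 𝒜 (wdeg_mem 𝒜 c n m)]
      rfl
    · exact map_zero _
  have hR : GradedRing.proj 𝒜 (r + q) (if n = r then c n else 0)
      = if n = r then wdeg (𝒜 := 𝒜) c n (n + q) else 0 := by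
    split_ifs with hnr
    · subst hnr
      rw [GradedRing.proj_apply]
      rfl
    · exact map_zero _
  rw [← hc] at h
  simp_rw [hL, hR] at h
  exact h

variable {𝒜} in
open scoped Classical in
noncomputable def xqB (c : ℤ →₀ A) (q : ℤ) : A ⊗[k] LaurentPolynomial k :=
  ∑ p ∈ c.support, (wdeg (𝒜 := 𝒜) c p (p + q)) ⊗ₜ[k] (T p : LaurentPolynomial k)

open scoped Classical in
theorem hBq {x : A ⊗[k] LaurentPolynomial k}
    (hx : IsGrouplikeL (gradedCoaction 𝒜) x) (q n : ℤ) :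
    xqB (𝒜 := 𝒜) (Psi (k := k) A x) q * gradedCoaction 𝒜 ((Psi (k := k) A x) n)
      = (wdeg (𝒜 := 𝒜) (Psi (k := k) A x) n (n + q)) ⊗ₜ[k] (T n : LaurentPolynomial k) := by
  set c := Psi (k := k) A x with hc
  rw [xqB, rho_cf 𝒜 c n, Finset.sum_mul_sum]
  simp_rw [tmul_mul_tmulT]
  apply (Psi (k := k) A).injective
  ext r
  simp only [map_sum, Psi_tmul]
  rw [coeff_double, Finsupp.single_apply]
  exact coeffC' 𝒜 hx q n r

open scoped Classical in
theorem star {x : A ⊗[k] LaurentPolynomial k}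
    (hx : IsGrouplikeL (gradedCoaction 𝒜) x) (q q' n n' : ℤ) :
    wdeg (𝒜 := 𝒜) (Psi (k := k) A x) n (n + q) * wdeg (𝒜 := 𝒜) (Psi (k := k) A x) n' (n' + q')
      = wdeg (𝒜 := 𝒜) (Psi (k := k) A x) n (n + q')
          * wdeg (𝒜 := 𝒜) (Psi (k := k) A x) n' (n' + q) := by
  set c := Psi (k := k) A x with hc
  have hr : (xqB (𝒜 := 𝒜) c q * gradedCoaction 𝒜 (c n))
        * (xqB (𝒜 := 𝒜) c q' * gradedCoaction 𝒜 (c n'))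
      = (xqB (𝒜 := 𝒜) c q' * gradedCoaction 𝒜 (c n))
        * (xqB (𝒜 := 𝒜) c q * gradedCoaction 𝒜 (c n')) := by ring
  rw [hBq 𝒜 hx q n, hBq 𝒜 hx q' n', hBq 𝒜 hx q' n, hBq 𝒜 hx q n'] at hr
  rw [tmul_mul_tmulT, tmul_mul_tmulT] at hr
  have h2 := congrArg (Psi (k := k) A) hr
  rw [Psi_tmul, Psi_tmul] at h2
  exact Finsupp.single_injective _ h2

open scoped Classical in
theorem sumW {x : A ⊗[k] LaurentPolynomial k}
    (hx : IsGrouplikeL (gradedCoaction 𝒜) x) (d : ℤ) :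
    ∑ n ∈ (Psi (k := k) A x).support, wdeg (𝒜 := 𝒜) (Psi (k := k) A x) n d
      = if d = 0 then 1 else 0 := by
  have h := congrArg (GradedRing.proj 𝒜 d) (grouplike_F2 𝒜 hx)
  rw [map_sum] at h
  have h1 : ∀ n, GradedRing.proj 𝒜 d ((Psi (k := k) A x) n)
      = wdeg (𝒜 := 𝒜) (Psi (k := k) A x) n d := fun n => GradedRing.proj_apply 𝒜 d _
  simp_rw [h1] at h
  rw [h, GradedRing.proj_apply]
  split_ifs with hd
  · subst hd
    exact DirectSum.decompose_of_mem_same 𝒜 (SetLike.one_mem_graded 𝒜)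
  · exact DirectSum.decompose_of_mem_ne 𝒜 (SetLike.one_mem_graded 𝒜) (Ne.symm hd)


open scoped Classical in
theorem key_mem_prime {x : A ⊗[k] LaurentPolynomial k}
    (hx : IsGrouplikeL (gradedCoaction 𝒜) x) (P : Ideal A) (hP : P.IsPrime) :
    ∀ n m : ℤ, m ≠ 0 → wdeg (𝒜 := 𝒜) (Psi (k := k) A x) n m ∈ P := by
  set c := Psi (k := k) A x with hc
  set Q : Ideal A := (P.homogeneousCore 𝒜).toIdeal with hQdef
  have hQP : Q ≤ P := Ideal.toIdeal_homogeneousCore_le 𝒜 P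
  have hQ : Q.IsPrime := hP.homogeneousCore (𝒜 := 𝒜)
  suffices hQQ : ∀ n m : ℤ, m ≠ 0 → wdeg (𝒜 := 𝒜) c n m ∈ Q by
    exact fun n m hm => hQP (hQQ n m hm)
  set SS : Finset (ℤ × ℤ) :=
    (c.support ×ˢ sdx 𝒜 c).filter (fun z => wdeg (𝒜 := 𝒜) c z.1 z.2 ∉ Q) with hSS
  have mem_SS : ∀ {n m : ℤ}, wdeg (𝒜 := 𝒜) c n m ∉ Q → (n, m) ∈ SS := by
    intro n m h
    have hne : wdeg (𝒜 := 𝒜) c n m ≠ 0 := fun h0 => h (h0 ▸ Q.zero_mem)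
    obtain ⟨h1, h2⟩ := wdeg_ne 𝒜 hne
    exact Finset.mem_filter.mpr ⟨Finset.mem_product.mpr ⟨h1, h2⟩, h⟩
  by_cases hSSe : SS = ∅
  · intro n m _
    by_contra h
    rw [hSSe] at mem_SS
    exact absurd (mem_SS h) (Finset.notMem_empty _)
  · have hne : SS.Nonempty := Finset.nonempty_of_ne_empty hSSe
    set Sx : Finset ℤ := SS.image (fun z => z.2 - z.1) with hSx
    set Sy : Finset ℤ := SS.image Prod.fst with hSy
    have hxne : Sx.Nonempty := hne.image _
    have hyne : Sy.Nonempty := hne.image _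
    have key0 : ∀ q ∈ Sx, ∀ nn ∈ Sy, wdeg (𝒜 := 𝒜) c nn (nn + q) ∉ Q := by
      intro q hq nn hnn
      obtain ⟨⟨n', m'⟩, hmem', hq'⟩ := Finset.mem_image.mp hq
      obtain ⟨⟨n₂, m₂⟩, hmem₂, hn₂⟩ := Finset.mem_image.mp hnn
      simp only at hq' hn₂
      subst hn₂
      have h1 : wdeg (𝒜 := 𝒜) c n' m' ∉ Q := (Finset.mem_filter.mp hmem').2
      have h2 : wdeg (𝒜 := 𝒜) c n₂ m₂ ∉ Q := (Finset.mem_filter.mp hmem₂).2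
      have hstar := star 𝒜 hx q (m₂ - n₂) n₂ n'
      rw [show n₂ + (m₂ - n₂) = m₂ by ring, show n' + q = m' by omega] at hstar
      intro hin
      have hL : wdeg (𝒜 := 𝒜) c n₂ (n₂ + q) * wdeg (𝒜 := 𝒜) c n' (n' + (m₂ - n₂)) ∈ Q :=
        Q.mul_mem_right _ hin
      rw [hstar] at hL
      rcases hQ.mem_or_mem hL with h | h
      · exact h2 h
      · exact h1 h
    have bound : ∀ q ∈ Sx, ∀ nn ∈ Sy,
        (∀ z ∈ SS, z.1 ≤ nn ∧ z.2 - z.1 ≤ q) ∨ (∀ z ∈ SS, nn ≤ z.1 ∧ q ≤ z.2 - z.1) →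
        nn + q = 0 := by
      intro q hq nn hnn hmono
      have hw : wdeg (𝒜 := 𝒜) c nn (nn + q) ∉ Q := key0 q hq nn hnn
      have hnsc : nn ∈ c.support := by
        refine (wdeg_ne 𝒜 (fun h0 => hw (h0 ▸ Q.zero_mem))).1
      set d := nn + q with hd
      have hterm : ∀ n ∈ c.support.erase nn, wdeg (𝒜 := 𝒜) c n d ∈ Q := by
        intro n hn
        by_contra hni
        have hmem := mem_SS hni
        have : n = nn := by
          rcases hmono with hmono | hmono
          · have := hmono (n, d) hmem; omega
          · have := hmono (n, d) hmem; omega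
        exact (Finset.mem_erase.mp hn).1 this
      by_contra hd0
      have hsum := sumW 𝒜 hx d
      rw [if_neg (by omega : ¬ d = 0)] at hsum
      rw [← Finset.add_sum_erase _ _ hnsc] at hsum
      have : wdeg (𝒜 := 𝒜) c nn d ∈ Q := by
        have h2 : wdeg (𝒜 := 𝒜) c nn d
            = - ∑ n ∈ c.support.erase nn, wdeg (𝒜 := 𝒜) c n d := by
          rw [eq_neg_iff_add_eq_zero]; exact hsum
        rw [h2]
        exact Q.neg_mem (Ideal.sum_mem _ hterm)
      exact hw this
    have hmax : Sy.max' hyne + Sx.max' hxne = 0 := by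
      refine bound _ (Sx.max'_mem hxne) _ (Sy.max'_mem hyne) (Or.inl ?_)
      intro z hz
      exact ⟨Sy.le_max' _ (Finset.mem_image.mpr ⟨z, hz, rfl⟩),
        Sx.le_max' _ (Finset.mem_image.mpr ⟨z, hz, rfl⟩)⟩
    have hmin : Sy.min' hyne + Sx.min' hxne = 0 := by
      refine bound _ (Sx.min'_mem hxne) _ (Sy.min'_mem hyne) (Or.inr ?_)
      intro z hz
      exact ⟨Sy.min'_le _ (Finset.mem_image.mpr ⟨z, hz, rfl⟩),
        Sx.min'_le _ (Finset.mem_image.mpr ⟨z, hz, rfl⟩)⟩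
    have hyle : Sy.min' hyne ≤ Sy.max' hyne := Sy.min'_le _ (Sy.max'_mem hyne)
    have hxle : Sx.min' hxne ≤ Sx.max' hxne := Sx.min'_le _ (Sx.max'_mem hxne)
    intro n m hm
    by_contra h
    have hmem := mem_SS h
    have h1 : n ∈ Sy := Finset.mem_image.mpr ⟨(n, m), hmem, rfl⟩
    have h2 : m - n ∈ Sx := Finset.mem_image.mpr ⟨(n, m), hmem, rfl⟩
    have b1 : n ≤ Sy.max' hyne := Sy.le_max' _ h1
    have b2 : Sy.min' hyne ≤ n := Sy.min'_le _ h1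
    have b3 : m - n ≤ Sx.max' hxne := Sx.le_max' _ h2
    have b4 : Sx.min' hxne ≤ m - n := Sx.min'_le _ h2
    omega

theorem key_homog [IsReduced A] {x : A ⊗[k] LaurentPolynomial k}
    (hx : IsGrouplikeL (gradedCoaction 𝒜) x) (n m : ℤ) (hm : m ≠ 0) :
    wdeg (𝒜 := 𝒜) (Psi (k := k) A x) n m = 0 := by
  have hnil : wdeg (𝒜 := 𝒜) (Psi (k := k) A x) n m ∈ nilradical A := by
    rw [nilradical_eq_sInf, Ideal.mem_sInf]
    intro P hP
    exact key_mem_prime 𝒜 hx P hP n m hm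
  rw [nilradical_eq_zero] at hnil
  exact hnil

theorem idem_decompose_eq_zero [IsReduced A] {a : A} (ha : IsIdempotentElem a)
    {m : ℤ} (hm : m ≠ 0) : (DirectSum.decompose 𝒜 a m : A) = 0 := by
  have hnil : (DirectSum.decompose 𝒜 a m : A) ∈ nilradical A := by
    rw [nilradical_eq_sInf, Ideal.mem_sInf]
    intro P hP
    have hQP : (P.homogeneousCore 𝒜).toIdeal ≤ P := Ideal.toIdeal_homogeneousCore_le 𝒜 P
    have hQ : (P.homogeneousCore 𝒜).toIdeal.IsPrime := hP.homogeneousCore (𝒜 := 𝒜)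
    have hhom := (P.homogeneousCore 𝒜).isHomogeneous
    have h0 : a * (a - 1) ∈ (P.homogeneousCore 𝒜).toIdeal := by
      have : a * (a - 1) = 0 := by
        rw [mul_sub, ha.eq, mul_one, sub_self]
      rw [this]; exact Ideal.zero_mem _
    rcases hQ.mem_or_mem h0 with h | h
    · exact hQP (hhom m h)
    · have h2 := hhom m h
      have h3 : (DirectSum.decompose 𝒜 (a - 1) m : A) = (DirectSum.decompose 𝒜 a m : A) := by
        have := map_sub (GradedRing.proj 𝒜 m) a 1
        rw [GradedRing.proj_apply, GradedRing.proj_apply, GradedRing.proj_apply] at this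
        rw [this, DirectSum.decompose_of_mem_ne 𝒜 (SetLike.one_mem_graded 𝒜) (Ne.symm hm),
          sub_zero]
      rw [h3] at h2
      exact hQP h2
  rw [nilradical_eq_zero] at hnil
  exact hnil

open scoped Classical in
theorem idem_mem_zero [IsReduced A] {a : A} (ha : IsIdempotentElem a) : a ∈ 𝒜 0 := by
  have hrepr := DirectSum.sum_support_decompose 𝒜 a
  rw [show a = ∑ m ∈ (DirectSum.decompose 𝒜 a).support, (DirectSum.decompose 𝒜 a m : A)
    from hrepr.symm]
  apply Submodule.sum_mem
  intro m _
  by_cases hm : m = 0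
  · subst hm; exact SetLike.coe_mem _
  · rw [idem_decompose_eq_zero 𝒜 ha hm]
    exact Submodule.zero_mem _


open scoped Classical in
theorem cf_mem_zero [IsReduced A] {x : A ⊗[k] LaurentPolynomial k}
    (hx : IsGrouplikeL (gradedCoaction 𝒜) x) (n : ℤ) : (Psi (k := k) A x) n ∈ 𝒜 0 := by
  rw [show (Psi (k := k) A x) n = ∑ m ∈ sdx 𝒜 (Psi (k := k) A x),
    wdeg (𝒜 := 𝒜) (Psi (k := k) A x) n m from (sum_wdeg 𝒜 _ n).symm]
  apply Submodule.sum_mem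
  intro m _
  by_cases hm : m = 0
  · subst hm; exact SetLike.coe_mem _
  · rw [key_homog 𝒜 hx n m hm]
    exact Submodule.zero_mem _

open scoped Classical in
theorem cf_orth [IsReduced A] {x : A ⊗[k] LaurentPolynomial k}
    (hx : IsGrouplikeL (gradedCoaction 𝒜) x) (p n : ℤ) :
    (Psi (k := k) A x) p * (Psi (k := k) A x) n
      = if p = n then (Psi (k := k) A x) n else 0 := by
  set c := Psi (k := k) A x with hc
  have hxe := x_repr x
  rw [← hc] at hxe
  have h := grouplike_F1 𝒜 hx n
  rw [← hc, rho_hom 𝒜 (c n) (cf_mem_zero 𝒜 hx n)] at h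
  conv_lhs at h => rw [hxe]
  rw [Finset.sum_mul] at h
  simp_rw [tmul_mul_tmulT, add_zero] at h
  have h2 := congrArg (fun z => (Psi (k := k) A z) p) h
  simp only [map_sum, Psi_tmul] at h2
  rw [sum_single_eval, Finsupp.single_apply] at h2
  by_cases hp : p ∈ c.support
  · rw [if_pos hp] at h2
    by_cases hpn : p = n
    · subst hpn; exact h2
    · rw [h2, if_neg (fun hh => hpn hh.symm), if_neg hpn]
  · rw [Finsupp.notMem_support_iff.mp hp, zero_mul]
    by_cases hpn : p = n
    · subst hpn
      rw [if_pos rfl, Finsupp.notMem_support_iff.mp hp]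
    · rw [if_neg hpn]

end GradedGrouplike

open GradedGrouplike in
/-- let `A` be a reduced commutative `ℤ`-graded `k`-algebra. Then the
grouplike elements of the coring `A ⊗ k[X, X⁻¹]` are exactly the elements
`Σᵢ eᵢ ⊗ X^{dᵢ}` for a decomposition `1 = e₁ + ⋯ + e_n` into orthogonal idempotents and
integers `dᵢ`; i.e. the natural map from continuous functions `Spec A → ℤ` to
`G(A ⊗ k[X,X⁻¹])` is a bijection. -/
theorem grouplikes_of_reduced_graded
    {k : Type u} [CommRing k] {A : Type u} [CommRing A] [Algebra k A]
    (𝒜 : ℤ → Submodule k A) [GradedAlgebra 𝒜] [IsReduced A]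
    (x : A ⊗[k] LaurentPolynomial k) :
    IsGrouplikeL (gradedCoaction 𝒜) x ↔
      ∃ (n : ℕ) (e : Fin n → A) (d : Fin n → ℤ),
        (∀ i, IsIdempotentElem (e i)) ∧
        (∀ i j, i ≠ j → e i * e j = 0) ∧
        (∑ i, e i = 1) ∧
        x = ∑ i, (e i) ⊗ₜ[k] (T (d i) : LaurentPolynomial k) := by
  classical
  constructor
  · intro hx
    set c := Psi (k := k) A x with hc
    set sc := c.support with hsc
    refine ⟨sc.card, fun i => c ((sc.equivFin.symm i : ℤ)),
      fun i => ((sc.equivFin.symm i : ℤ)), ?_, ?_, ?_, ?_⟩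
    · intro i
      have h := cf_orth 𝒜 hx ((sc.equivFin.symm i : ℤ)) ((sc.equivFin.symm i : ℤ))
      rw [if_pos rfl] at h
      exact h
    · intro i j hij
      have hne : ((sc.equivFin.symm i : ℤ)) ≠ ((sc.equivFin.symm j : ℤ)) := by
        intro hh
        exact hij (sc.equivFin.symm.injective (Subtype.ext hh))
      have h := cf_orth 𝒜 hx ((sc.equivFin.symm i : ℤ)) ((sc.equivFin.symm j : ℤ))
      rw [if_neg hne] at h
      exact h
    · have h1 : ∑ i : Fin sc.card, c ((sc.equivFin.symm i : ℤ))
          = ∑ a : { y // y ∈ sc }, c (a : ℤ) :=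
        Equiv.sum_comp sc.equivFin.symm (fun a => c (a : ℤ))
      rw [h1, Finset.sum_coe_sort sc (fun y => c y)]
      exact grouplike_F2 𝒜 hx
    · have h1 : ∑ i : Fin sc.card,
            (c ((sc.equivFin.symm i : ℤ))) ⊗ₜ[k] (T ((sc.equivFin.symm i : ℤ)) :
              LaurentPolynomial k)
          = ∑ a : { y // y ∈ sc }, (c (a : ℤ)) ⊗ₜ[k] (T ((a : ℤ)) : LaurentPolynomial k) :=
        Equiv.sum_comp sc.equivFin.symm
          (fun a => (c (a : ℤ)) ⊗ₜ[k] (T ((a : ℤ)) : LaurentPolynomial k))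
      rw [h1, Finset.sum_coe_sort sc
        (fun y => (c y) ⊗ₜ[k] (T y : LaurentPolynomial k))]
      have := x_repr x
      rw [← hc, ← hsc] at this
      exact this
  · rintro ⟨n, e, d, hidem, horth, hsum, hxe⟩
    have hmem : ∀ i, e i ∈ 𝒜 0 := fun i => idem_mem_zero 𝒜 (hidem i)
    constructor
    · rw [hxe]
      rw [map_sum, map_sum, map_sum, map_sum]
      refine Finset.sum_congr rfl fun i _ => ?_
      rw [LinearMap.lTensor_tmul, comulL_T, TensorProduct.assoc_symm_tmul,
        LinearMap.rTensor_tmul, rho_hom 𝒜 (e i) (hmem i), LinearMap.rTensor_tmul,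
        LinearMap.mulLeft_apply]
      congr 1
      symm
      rw [Finset.sum_mul]
      rw [Finset.sum_eq_single i]
      · rw [tmul_mul_tmulT, (hidem i).eq, add_zero]
      · intro j _ hji
        rw [tmul_mul_tmulT, horth j i hji, TensorProduct.zero_tmul]
      · intro hni
        exact absurd (Finset.mem_univ i) hni
    · rw [hxe, map_sum, map_sum]
      have h1 : ∀ i, (TensorProduct.rid k A)
          ((LinearMap.lTensor A counitL) ((e i) ⊗ₜ[k] (T (d i) : LaurentPolynomial k)))
          = e i := by
        intro i
        rw [LinearMap.lTensor_tmul, counitL_T, TensorProduct.rid_tmul, one_smul]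
      simp_rw [h1]
      exact hsum
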